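/- Let f_i : ℝ^n → ℝ be bounded below with L-Lipschitz gradients, and let x(t) solve ẋ(t) = −proj_{C_η(x(t))}(0) where C_η(x) = conv{∇f_i(x)/(‖∇f_i(x)‖ + η)} with η > 0. Then for all t > 0, min_{s∈[0,t]} ‖proj_{C_η(x(s))}(0)‖ ≤ sqrt( min_i ( f_i(x₀) − inf_x f_i(x) ) ) / (√η √t). -/

import Mathlib

set_option maxHeartbeats 1000000

noncomputable section
open Metric Set Filter RealInnerProductSpace


open RealInnerProductSpace in
private lemma min_norm_inner_aux {E : Type*} [NormedAddCommGroup E] [InnerProductSpace ℝ E]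
    {K : Set E} (hK : Convex ℝ K) {v : E} (hv : v ∈ K) (hmin : ∀ w ∈ K, ‖v‖ ≤ ‖w‖) :
    ∀ w ∈ K, ⟪v, v⟫ ≤ ⟪v, w⟫ := by
  haveI : Nonempty K := ⟨⟨v, hv⟩⟩
  have heq : ‖(0:E) - v‖ = ⨅ w : K, ‖(0:E) - w‖ := by
    refine le_antisymm (le_ciInf fun w => ?_)
      (ciInf_le (f := fun w : K => ‖(0:E) - w‖) ⟨0, by rintro a ⟨w, rfl⟩; exact norm_nonneg _⟩ ⟨v, hv⟩)
    simp only [zero_sub, norm_neg]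
    exact hmin _ w.2
  intro w hw
  have h := (norm_eq_iInf_iff_real_inner_le_zero hK hv).1 heq w hw
  rw [zero_sub, inner_sub_right, inner_neg_left, inner_neg_left] at h
  linarith

/-- `O(1/√t)` rate on the minimal projection norm in the
non-convex case, for the normalized flow with `η > 0`. -/
theorem nonconvex_rate_MBGF {n m : ℕ} [NeZero m]
    (f : Fin m → EuclideanSpace ℝ (Fin n) → ℝ)
    (g : Fin m → EuclideanSpace ℝ (Fin n) → EuclideanSpace ℝ (Fin n))
    (hg : ∀ i u, HasGradientAt (f i) (g i u) u)
    (hbelow : ∀ i, BddBelow (Set.range (f i)))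
    (L : ℝ) (hL : ∀ i u v, ‖g i u - g i v‖ ≤ L * ‖u - v‖)
    (η : ℝ) (hη : 0 < η)
    (x x' : ℝ → EuclideanSpace ℝ (Fin n))
    (p : ℝ → EuclideanSpace ℝ (Fin n))
    (hx : ∀ t ≥ (0:ℝ), HasDerivAt x (x' t) t)
    (hflow : ∀ t ≥ (0:ℝ),
      p t ∈ convexHull ℝ (Set.range fun i => (‖g i (x t)‖ + η)⁻¹ • g i (x t)) ∧
      (∀ y ∈ convexHull ℝ (Set.range fun i => (‖g i (x t)‖ + η)⁻¹ • g i (x t)),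
        ‖p t‖ ≤ ‖y‖) ∧
      x' t = -(p t)) :
    ∀ t > (0:ℝ),
      sInf ((fun s => ‖p s‖) '' Set.Icc 0 t) ≤
        Real.sqrt (Finset.univ.inf' Finset.univ_nonempty
            fun i => f i (x 0) - ⨅ y : EuclideanSpace ℝ (Fin n), f i y) /
          (Real.sqrt η * Real.sqrt t) := by
  intro t ht
  set m0 : ℝ := sInf ((fun s => ‖p s‖) '' Set.Icc 0 t) with hm0def
  have hne : ((fun s => ‖p s‖) '' Set.Icc 0 t).Nonempty :=
    ⟨‖p 0‖, ⟨0, ⟨le_refl 0, ht.le⟩, rfl⟩⟩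
  have hbdd : BddBelow ((fun s => ‖p s‖) '' Set.Icc 0 t) :=
    ⟨0, fun a ⟨s, _, h⟩ => h ▸ norm_nonneg _⟩
  have hm0nn : 0 ≤ m0 := le_csInf hne fun a ⟨s, _, h⟩ => h ▸ norm_nonneg _
  have hm0le : ∀ s ∈ Set.Icc (0:ℝ) t, m0 ≤ ‖p s‖ := fun s hs =>
    csInf_le hbdd ⟨s, hs, rfl⟩
  -- key inner product inequality
  have key : ∀ (i : Fin m) (s : ℝ), 0 ≤ s → η * ‖p s‖ ^ 2 ≤ ⟪g i (x s), p s⟫ := by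
    intro i s hs
    obtain ⟨hpmem, hpmin, -⟩ := hflow s hs
    have hineq := min_norm_inner_aux (convex_convexHull ℝ _) hpmem hpmin
    have hw : (‖g i (x s)‖ + η)⁻¹ • g i (x s) ∈
        convexHull ℝ (Set.range fun i => (‖g i (x s)‖ + η)⁻¹ • g i (x s)) :=
      subset_convexHull ℝ _ ⟨i, rfl⟩
    have h2 := hineq _ hw
    have hgpos : 0 < ‖g i (x s)‖ + η := by positivity
    rw [real_inner_smul_right, real_inner_self_eq_norm_sq] at h2
    have h3 : ‖p s‖ ^ 2 ≤ (‖g i (x s)‖ + η)⁻¹ * ⟪p s, g i (x s)⟫ := h2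
    have h4 : (‖g i (x s)‖ + η) * ‖p s‖ ^ 2 ≤ ⟪p s, g i (x s)⟫ := by
      have := mul_le_mul_of_nonneg_left h3 hgpos.le
      rwa [← mul_assoc, mul_inv_cancel₀ hgpos.ne', one_mul] at this
    have h5 : η * ‖p s‖ ^ 2 ≤ (‖g i (x s)‖ + η) * ‖p s‖ ^ 2 := by
      have : η ≤ ‖g i (x s)‖ + η := le_add_of_nonneg_left (norm_nonneg _)
      exact mul_le_mul_of_nonneg_right this (sq_nonneg _)
    rw [real_inner_comm]
    linarith
  -- descent for each i
  have descent : ∀ i : Fin m, η * m0 ^ 2 * t ≤ f i (x 0) -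
      ⨅ y : EuclideanSpace ℝ (Fin n), f i y := by
    intro i
    set φ : ℝ → ℝ := fun s => f i (x s) + η * m0 ^ 2 * s with hφ
    have hder : ∀ s ∈ Set.Icc (0:ℝ) t,
        HasDerivAt φ (⟪g i (x s), x' s⟫ + η * m0 ^ 2) s := by
      intro s hs
      have hd : HasDerivAt (fun s => f i (x s)) (⟪g i (x s), x' s⟫) s := by
        have := ((hg i (x s)).hasFDerivAt).comp_hasDerivAt s (hx s hs.1)
        simp only [InnerProductSpace.toDual_apply_apply] at this
        exact this
      have := hd.add ((hasDerivAt_id s).const_mul (η * m0 ^ 2))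
      rw [mul_one] at this
      exact this
    have hnonpos : ∀ s ∈ Set.Icc (0:ℝ) t, ⟪g i (x s), x' s⟫ + η * m0 ^ 2 ≤ 0 := by
      intro s hs
      obtain ⟨-, -, hxp⟩ := hflow s hs.1
      rw [hxp, inner_neg_right]
      have h1 := key i s hs.1
      have h2 : m0 ^ 2 ≤ ‖p s‖ ^ 2 := pow_le_pow_left₀ hm0nn (hm0le s hs) 2
      nlinarith [hη]
    have hanti : AntitoneOn φ (Set.Icc 0 t) := by
      apply antitoneOn_of_deriv_nonpos (convex_Icc 0 t)
      · exact fun s hs => (hder s hs).continuousAt.continuousWithinAt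
      · intro s hs
        rw [interior_Icc] at hs
        exact ((hder s ⟨hs.1.le, hs.2.le⟩).differentiableAt).differentiableWithinAt
      · intro s hs
        rw [interior_Icc] at hs
        have hs' : s ∈ Set.Icc (0:ℝ) t := ⟨hs.1.le, hs.2.le⟩
        rw [(hder s hs').deriv]
        exact hnonpos s hs'
    have hmono := hanti (Set.left_mem_Icc.2 ht.le) (Set.right_mem_Icc.2 ht.le) ht.le
    -- hmono : φ t ≤ φ 0
    have hinf : (⨅ y : EuclideanSpace ℝ (Fin n), f i y) ≤ f i (x t) :=
      ciInf_le (hbelow i) (x t)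
    simp only [hφ] at hmono
    linarith
  have hM : η * m0 ^ 2 * t ≤ Finset.univ.inf' Finset.univ_nonempty
      fun i => f i (x 0) - ⨅ y : EuclideanSpace ℝ (Fin n), f i y :=
    Finset.le_inf' _ _ fun i _ => descent i
  set M : ℝ := Finset.univ.inf' Finset.univ_nonempty
      fun i => f i (x 0) - ⨅ y : EuclideanSpace ℝ (Fin n), f i y with hMdef
  have hMnn : 0 ≤ M := le_trans (by positivity) hM
  have h6 : m0 ^ 2 ≤ M / (η * t) := by
    rw [le_div_iff₀ (by positivity)]
    nlinarith
  calc m0 ≤ Real.sqrt (M / (η * t)) := (Real.le_sqrt hm0nn (by positivity)).2 h6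
    _ = Real.sqrt M / (Real.sqrt η * Real.sqrt t) := by
        rw [Real.sqrt_div hMnn, Real.sqrt_mul hη.le]
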